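/- arXiv:2110.11152 — 4 statements merged into one kernel-verified Lean document; each statement's English description precedes it below -/
import Mathlib

section
/- Let R : ℝⁿ → ℝⁿ be a reversing symmetry of the autonomous ODE dx/dt = F(x) (i.e., DR(x)F(x) = −F(R(x)) for all x), and suppose R is an involution. Then an orbit of the ODE is R-symmetric (invariant as a set under R) if and only if it intersects the fixed-point set Fix(R) = {x : R(x) = x}. -/
open Set Filter Topology

/-- Global uniqueness of solutions for a C¹ autonomous vector field. -/
lemma ode_uniq_aux {E : Type*} [NormedAddCommGroup E] [NormedSpace ℝ E]
    (F : E → E) (hF : ContDiff ℝ 1 F) (f g : ℝ → E)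
    (hf : ∀ t, HasDerivAt f (F (f t)) t) (hg : ∀ t, HasDerivAt g (F (g t)) t)
    (h0 : f 0 = g 0) : ∀ t, f t = g t := by
  set S : Set ℝ := {t | f t = g t} with hSdef
  have hcl : IsClosed S :=
    isClosed_eq (continuous_iff_continuousAt.2 fun t => (hf t).continuousAt)
      (continuous_iff_continuousAt.2 fun t => (hg t).continuousAt)
  have hop : IsOpen S := by
    rw [isOpen_iff_mem_nhds]
    intro t₀ ht₀
    obtain ⟨K, s, hs, hlip⟩ := (hF.contDiffAt (x := f t₀)).exists_lipschitzOnWith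
    have heq : f =ᶠ[𝓝 t₀] g := by
      refine ODE_solution_unique_of_eventually (v := fun _ x => F x)
        (s := fun _ => s) (Filter.Eventually.of_forall fun _ => hlip) ?_ ?_ ht₀
      · exact Filter.eventually_of_mem ((hf t₀).continuousAt.preimage_mem_nhds hs)
          fun t ht => ⟨hf t, ht⟩
      · have hgf : g t₀ = f t₀ := ht₀.symm
        exact Filter.eventually_of_mem
          ((hg t₀).continuousAt.preimage_mem_nhds (hgf ▸ hs)) fun t ht => ⟨hg t, ht⟩
    exact heq.mono fun t ht => ht
  have : S = univ := IsClopen.eq_univ ⟨hcl, hop⟩ ⟨0, h0⟩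
  intro t
  have := this ▸ (mem_univ t)
  exact this

/-- A reversing-symmetric orbit criterion: for a complete flow φ of a C¹ vector field F
and an involutive reversing symmetry R (i.e. DR(x)F(x) = −F(R(x))), an orbit is
R-symmetric if and only if it intersects the fixed-point set of R. -/
theorem stmt_6 (n : ℕ)
    (F : (Fin n → ℝ) → (Fin n → ℝ)) (hF : ContDiff ℝ 1 F)
    (φ : ℝ → (Fin n → ℝ) → (Fin n → ℝ))
    (hφ0 : ∀ x, φ 0 x = x)
    (hflow : ∀ s t x, φ (s + t) x = φ s (φ t x))
    (hsol : ∀ x t, HasDerivAt (fun τ => φ τ x) (F (φ t x)) t)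
    (R : (Fin n → ℝ) → (Fin n → ℝ))
    (DR : (Fin n → ℝ) → ((Fin n → ℝ) →L[ℝ] (Fin n → ℝ)))
    (hR : ∀ x, HasFDerivAt R (DR x) x)
    (hrev : ∀ x, DR x (F x) = -F (R x))
    (hinvol : ∀ x, R (R x) = x) :
    ∀ x₀ : Fin n → ℝ,
      (R '' Set.range (fun t => φ t x₀) = Set.range (fun t => φ t x₀)) ↔
        ∃ y ∈ Set.range (fun t => φ t x₀), R y = y := by
  -- Key identity: R (φ t x) = φ (-t) (R x)
  have key : ∀ x t, R (φ t x) = φ (-t) (R x) := by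
    intro x t
    have main : ∀ u, R (φ (-u) x) = φ u (R x) := by
      refine ode_uniq_aux F hF _ _ ?_ (fun u => hsol (R x) u) ?_
      · intro u
        have hφ' : HasDerivAt (fun u => φ (-u) x) ((-1 : ℝ) • F (φ (-u) x)) u := by
          exact HasDerivAt.scomp u (hsol x (-u)) (hasDerivAt_neg u)
        rw [neg_one_smul] at hφ'
        have := (hR (φ (-u) x)).comp_hasDerivAt u hφ'
        rwa [map_neg, hrev, neg_neg] at this
      · simp [hφ0]
    have := main (-t)
    rwa [neg_neg] at this
  intro x₀
  constructor
  · -- orbit R-symmetric → fixed point on orbit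
    intro h
    have hx : R x₀ ∈ Set.range (fun t => φ t x₀) := by
      rw [← h]
      exact ⟨x₀, ⟨0, hφ0 x₀⟩, rfl⟩
    obtain ⟨T, hT⟩ := hx
    refine ⟨φ (T / 2) x₀, ⟨T / 2, rfl⟩, ?_⟩
    have hT' : φ T x₀ = R x₀ := hT
    rw [key x₀ (T/2), ← hT', ← hflow]
    ring_nf
  · -- fixed point on orbit → orbit R-symmetric
    rintro ⟨y, ⟨s, hs⟩, hy⟩
    apply Set.Subset.antisymm
    · rintro _ ⟨_, ⟨t, rfl⟩, rfl⟩
      have h1 : φ t x₀ = φ (t - s) y := by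
        rw [← hs, ← hflow]; ring_nf
      refine ⟨s - t + s, ?_⟩
      simp only
      rw [h1, key, hy, ← hs, ← hflow]
      ring_nf
    · rintro _ ⟨t, rfl⟩
      refine ⟨R (φ t x₀), ?_, hinvol _⟩
      have h1 : φ t x₀ = φ (t - s) y := by
        rw [← hs, ← hflow]; ring_nf
      rw [h1, key, hy, ← hs, ← hflow]
      exact ⟨-(t-s) + s, rfl⟩
end

section
/- Let θ(t) be a solution of the spin-orbit equation satisfying θ(α) = β for some α ∈ {0, π} and β ∈ {0, π/2}. Then θ satisfies the symmetry relation θ(t) = 2β − θ(2α − t) for all t, and θ̇(t) = θ̇(2α − t). -/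
open Real Set

private lemma sin_periodic_key (α β : ℝ) (hα : α = 0 ∨ α = π) (hβ : β = 0 ∨ β = π / 2)
    (x : ℝ) : Real.sin (x - 4 * α) = Real.sin (x - 4 * β) := by
  rcases hα with rfl | rfl <;> rcases hβ with rfl | rfl
  · norm_num
  · norm_num
    rw [show x - 4 * (π/2) = x - 2 * π by ring, Real.sin_sub_two_pi]
  · norm_num
    rw [show x - 4 * π = (x - 2 * π) - 2 * π by ring, Real.sin_sub_two_pi,
      Real.sin_sub_two_pi]
  · rw [show x - 4 * π = (x - 2 * π) - 2 * π by ring, Real.sin_sub_two_pi,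
      show x - 4 * (π/2) = x - 2 * π by ring]

private lemma sin_lip (x y : ℝ) : |Real.sin x - Real.sin y| ≤ |x - y| := by
  rw [Real.sin_sub_sin]
  have h1 : |Real.sin ((x - y) / 2)| ≤ |x - y| / 2 := by
    have h := Real.abs_sin_le_abs (x := (x - y) / 2)
    rwa [abs_div, abs_two] at h
  have h2 : |Real.cos ((x + y) / 2)| ≤ 1 := Real.abs_cos_le_one _
  calc |2 * Real.sin ((x - y) / 2) * Real.cos ((x + y) / 2)|
      = 2 * |Real.sin ((x - y) / 2)| * |Real.cos ((x + y) / 2)| := by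
        rw [abs_mul, abs_mul]; norm_num
    _ ≤ |x - y| := by
        nlinarith [abs_nonneg (Real.sin ((x - y) / 2)), abs_nonneg (Real.cos ((x + y) / 2)),
          abs_nonneg (x - y)]

/-- If a solution of the spin-orbit equation satisfies θ(α) = β with α ∈ {0, π},
β ∈ {0, π/2}, then θ(t) = 2β − θ(2α − t) and θ̇(t) = θ̇(2α − t) for all t. -/
theorem stmt_8 (e a lam α β : ℝ) (he0 : 0 ≤ e) (he1 : e < 1) (ha : 0 < a)
    (hα : α = 0 ∨ α = π) (hβ : β = 0 ∨ β = π / 2)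
    (r f : ℝ → ℝ) (hrc : Continuous r) (hfc : Continuous f) (hrpos : ∀ t, 0 < r t)
    (hrsym : ∀ t, r (2 * α - t) = r t)
    (hfsym : ∀ t, f (2 * α - t) = 2 * α - f t)
    (θ θ' θ'' : ℝ → ℝ)
    (hd1 : ∀ t, HasDerivAt θ (θ' t) t)
    (hd2 : ∀ t, HasDerivAt θ' (θ'' t) t)
    (hode : ∀ t, θ'' t + (lam / 2) * (a / r t) ^ 3 * Real.sin (2 * θ t - 2 * f t) = 0)
    (hbc : θ α = β) :
    ∀ t, θ t = 2 * β - θ (2 * α - t) ∧ θ' t = θ' (2 * α - t) := by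
  -- coefficient function
  set c : ℝ → ℝ := fun s => lam / 2 * (a / r s) ^ 3 with hc_def
  have hcc : Continuous c :=
    continuous_const.mul ((continuous_const.div hrc fun s => (hrpos s).ne').pow 3)
  have hθc : Continuous θ := continuous_iff_continuousAt.2 fun s => (hd1 s).continuousAt
  have hθ'c : Continuous θ' := continuous_iff_continuousAt.2 fun s => (hd2 s).continuousAt
  intro t0
  set a' : ℝ := min α t0 - 1 with ha'
  set b' : ℝ := max α t0 + 1 with hb'
  have hab : a' ≤ b' := by
    have h1 : min α t0 ≤ max α t0 := (min_le_left _ _).trans (le_max_left _ _)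
    simp only [ha', hb']; linarith
  obtain ⟨C, hC⟩ := (isCompact_Icc (a := a') (b := b')).exists_bound_of_continuousOn
    hcc.continuousOn
  have hC0 : 0 ≤ C := le_trans (norm_nonneg _) (hC a' ⟨le_rfl, hab⟩)
  set K : NNReal := ⟨1 + 2 * C, by positivity⟩ with hK
  have hKval : (K : ℝ) = 1 + 2 * C := rfl
  set σ : ℝ → ℝ := fun s => max a' (min s b') with hσ_def
  have hσmem : ∀ s, σ s ∈ Icc a' b' := fun s =>
    ⟨le_max_left _ _, max_le hab (min_le_right _ _)⟩
  have hσid : ∀ s ∈ Ioo a' b', σ s = s := by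
    intro s hs
    simp only [hσ_def]
    rw [min_eq_left hs.2.le, max_eq_right hs.1.le]
  set v : ℝ → ℝ × ℝ → ℝ × ℝ :=
    fun s p => (p.2, -(c (σ s)) * Real.sin (2 * p.1 - 2 * f (σ s))) with hv_def
  -- Lipschitz bound
  have hlip : ∀ s, LipschitzWith K (v s) := by
    intro s
    apply LipschitzWith.of_dist_le_mul
    intro p q
    have hb : |c (σ s)| ≤ C := hC _ (hσmem s)
    have hfst : dist p.1 q.1 ≤ dist p q := by
      rw [Prod.dist_eq]; exact le_max_left _ _
    have hsnd : dist p.2 q.2 ≤ dist p q := by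
      rw [Prod.dist_eq]; exact le_max_right _ _
    rw [Prod.dist_eq]
    apply max_le
    · calc dist (v s p).1 (v s q).1 = dist p.2 q.2 := rfl
        _ ≤ dist p q := hsnd
        _ ≤ K * dist p q := by nlinarith [dist_nonneg (x := p) (y := q), hKval, hC0]
    · have hdiff : (v s p).2 - (v s q).2 = -(c (σ s) * (Real.sin (2 * p.1 - 2 * f (σ s))
          - Real.sin (2 * q.1 - 2 * f (σ s)))) := by
        simp only [hv_def]; ring
      calc dist (v s p).2 (v s q).2
          = |c (σ s)| * |Real.sin (2 * p.1 - 2 * f (σ s))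
              - Real.sin (2 * q.1 - 2 * f (σ s))| := by
            rw [Real.dist_eq, hdiff, abs_neg, abs_mul]
        _ ≤ C * |(2 * p.1 - 2 * f (σ s)) - (2 * q.1 - 2 * f (σ s))| := by
            apply mul_le_mul hb (sin_lip _ _) (abs_nonneg _) hC0
        _ = C * (2 * |p.1 - q.1|) := by
            rw [show (2 * p.1 - 2 * f (σ s)) - (2 * q.1 - 2 * f (σ s)) = 2 * (p.1 - q.1) by ring,
              abs_mul]
            norm_num
        _ ≤ K * dist p q := by
            have h1 : |p.1 - q.1| ≤ dist p q := by rw [← Real.dist_eq]; exact hfst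
            nlinarith [dist_nonneg (x := p) (y := q), abs_nonneg (p.1 - q.1)]
  set u : ℝ → ℝ × ℝ := fun s => (θ s, θ' s) with hu_def
  set w : ℝ → ℝ × ℝ := fun s => (2 * β - θ (2 * α - s), θ' (2 * α - s)) with hw_def
  have hode' : ∀ s, θ'' s = -(c s) * Real.sin (2 * θ s - 2 * f s) := by
    intro s; have := hode s; simp only [hc_def]; linarith
  -- u solves the ODE
  have hu' : ∀ s ∈ Ioo a' b', HasDerivAt u (v s (u s)) s := by
    intro s hs
    have h := (hd1 s).prodMk (hd2 s)
    have : v s (u s) = (θ' s, θ'' s) := by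
      simp only [hv_def, hu_def, hσid s hs]
      rw [hode' s]
    rw [this]
    exact h
  -- w solves the ODE
  have hw' : ∀ s ∈ Ioo a' b', HasDerivAt w (v s (w s)) s := by
    intro s hs
    have hneg : HasDerivAt (fun x : ℝ => 2 * α - x) (-1) s := by
      simpa using (hasDerivAt_id s).const_sub (2 * α)
    have h1 : HasDerivAt (fun x => 2 * β - θ (2 * α - x)) (θ' (2 * α - s)) s := by
      have := ((hd1 (2 * α - s)).comp s hneg).const_sub (2 * β)
      simpa using this
    have h2 : HasDerivAt (fun x => θ' (2 * α - x)) (-θ'' (2 * α - s)) s := by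
      have := (hd2 (2 * α - s)).comp s hneg
      simpa [Function.comp_def] using this
    have h := h1.prodMk h2
    have hval : v s (w s) = (θ' (2 * α - s), -θ'' (2 * α - s)) := by
      simp only [hv_def, hw_def, hσid s hs]
      refine Prod.ext rfl ?_
      simp only
      rw [hode' (2 * α - s)]
      have hcsym : c (2 * α - s) = c s := by simp only [hc_def, hrsym s]
      rw [hcsym, hfsym s]
      rw [show 2 * θ (2 * α - s) - 2 * (2 * α - f s)
          = (2 * θ (2 * α - s) + 2 * f s) - 4 * α by ring]
      rw [sin_periodic_key α β hα hβ]
      rw [show 2 * (2 * β - θ (2 * α - s)) - 2 * f s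
          = -((2 * θ (2 * α - s) + 2 * f s) - 4 * β) by ring, Real.sin_neg]
      ring
    rw [hval]
    exact h
  have heq0 : u α = w α := by
    simp only [hu_def, hw_def]
    rw [show 2 * α - α = α by ring, hbc]
    refine Prod.ext ?_ rfl
    simp; ring
  have hαmem : α ∈ Ioo a' b' := by
    constructor
    · simp only [ha']; have := min_le_left α t0; linarith
    · simp only [hb']; have := le_max_left α t0; linarith
  have huc : ContinuousOn u (Icc a' b') := (hθc.prodMk hθ'c).continuousOn
  have hwc : ContinuousOn w (Icc a' b') := by
    apply Continuous.continuousOn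
    exact (continuous_const.sub (hθc.comp (continuous_const.sub continuous_id))).prodMk
      (hθ'c.comp (continuous_const.sub continuous_id))
  have hEq := ODE_solution_unique_of_mem_Icc (s := fun _ => (univ : Set (ℝ × ℝ)))
    (fun s _ => (hlip s).lipschitzOnWith) hαmem huc hu' (fun _ _ => trivial)
    hwc hw' (fun _ _ => trivial) heq0
  have ht0 : t0 ∈ Icc a' b' := by
    constructor
    · simp only [ha']; have := min_le_right α t0; linarith
    · simp only [hb']; have := le_max_right α t0; linarith
  have := hEq ht0
  simp only [hu_def, hw_def, Prod.mk.injEq] at this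
  exact this
end

section
/- Conversely, if θ(t) is a solution of the spin-orbit equation in m:n spin-orbit resonance (θ(t + 2πn) = θ(t) + 2πm for all t) which additionally satisfies θ(α) = β for some α ∈ {0, π}, β ∈ {0, π/2}, then θ(α + nπ) = β + mπ. -/
open Real Set

/-- Conversely: a solution of the spin-orbit equation in m:n spin-orbit resonance which
satisfies θ(α) = β with α ∈ {0, π}, β ∈ {0, π/2} also satisfies θ(α + nπ) = β + mπ. -/
theorem stmt_10 (e a lam α β : ℝ) (he0 : 0 ≤ e) (he1 : e < 1) (ha : 0 < a)
    (m n : ℤ) (hn : n ≠ 0)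
    (hα : α = 0 ∨ α = π) (hβ : β = 0 ∨ β = π / 2)
    (r f : ℝ → ℝ) (hrc : Continuous r) (hfc : Continuous f) (hrpos : ∀ t, 0 < r t)
    (hrsym : ∀ t, r (2 * α - t) = r t)
    (hfsym : ∀ t, f (2 * α - t) = 2 * α - f t)
    (θ θ' θ'' : ℝ → ℝ)
    (hd1 : ∀ t, HasDerivAt θ (θ' t) t)
    (hd2 : ∀ t, HasDerivAt θ' (θ'' t) t)
    (hode : ∀ t, θ'' t + (lam / 2) * (a / r t) ^ 3 * Real.sin (2 * θ t - 2 * f t) = 0)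
    (hres : ∀ t, θ (t + 2 * π * n) = θ t + 2 * π * m)
    (hbc : θ α = β) :
    θ (α + n * π) = β + m * π := by
  -- the coefficient
  set c : ℝ → ℝ := fun t => (lam / 2) * (a / r t) ^ 3 with hc_def
  have hcc : Continuous c := by
    apply Continuous.mul continuous_const
    exact (continuous_const.div hrc (fun t => (hrpos t).ne')).pow 3
  have hcsym : ∀ t, c (2 * α - t) = c t := by
    intro t; simp only [hc_def, hrsym]
  -- interval
  set L : ℝ := |(n : ℝ)| * π + 1 with hL
  have hLpos : 0 < L := by positivity
  set A : ℝ := α - L with hA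
  set B : ℝ := α + L with hB
  have hAB : A ≤ B := by simp only [hA, hB]; linarith
  -- truncated coefficient
  set q : ℝ → ℝ := fun t => c ((projIcc A B hAB t : ℝ)) with hq_def
  obtain ⟨C₀, hC₀⟩ := (isCompact_Icc (a := A) (b := B)).exists_bound_of_continuousOn
    hcc.continuousOn
  set C : ℝ := max C₀ 0 with hC
  have hCnn : 0 ≤ C := le_max_right _ _
  have hqC : ∀ t, |q t| ≤ C := by
    intro t
    have := hC₀ _ (projIcc A B hAB t).2
    simp only [Real.norm_eq_abs] at this
    exact this.trans (le_max_left _ _)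
  have hqc : ∀ t ∈ Icc A B, q t = c t := by
    intro t ht
    simp only [hq_def, projIcc_of_mem hAB ht]
  -- the vector field
  set v : ℝ → ℝ × ℝ → ℝ × ℝ :=
    fun t p => (p.2, -(q t) * Real.sin (2 * p.1 - 2 * f t)) with hv_def
  set K : NNReal := Real.toNNReal (2 * C + 1) with hK
  have hKval : (K : ℝ) = 2 * C + 1 := Real.coe_toNNReal _ (by linarith)
  have hlip : LipschitzWith 1 Real.sin := by
    apply lipschitzWith_of_nnnorm_deriv_le Real.differentiable_sin
    intro x
    rw [Real.deriv_sin]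
    simpa [Real.norm_eq_abs, ← NNReal.coe_le_coe] using Real.abs_cos_le_one x
  have hv : ∀ t, LipschitzWith K (v t) := by
    intro t
    apply LipschitzWith.of_dist_le_mul
    rintro ⟨x, y⟩ ⟨x', y'⟩
    have h1 : dist x x' ≤ dist ((x, y) : ℝ × ℝ) (x', y') := le_max_left _ _
    have h2 : dist y y' ≤ dist ((x, y) : ℝ × ℝ) (x', y') := le_max_right _ _
    have hd : (0:ℝ) ≤ dist ((x, y) : ℝ × ℝ) (x', y') := dist_nonneg
    rw [hv_def, Prod.dist_eq]
    simp only
    apply max_le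
    · calc dist y y' ≤ dist ((x, y) : ℝ × ℝ) (x', y') := h2
        _ ≤ (K : ℝ) * dist ((x, y) : ℝ × ℝ) (x', y') := by
            rw [hKval]; nlinarith
    · set S1 := Real.sin (2 * x - 2 * f t) with hS1
      set S2 := Real.sin (2 * x' - 2 * f t) with hS2
      have hsin : |S1 - S2| ≤ 2 * |x - x'| := by
        have := hlip.dist_le_mul (2 * x - 2 * f t) (2 * x' - 2 * f t)
        rw [Real.dist_eq, Real.dist_eq] at this
        calc |S1 - S2| ≤ |(2 * x - 2 * f t) - (2 * x' - 2 * f t)| := by simpa using this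
          _ = 2 * |x - x'| := by
              rw [show (2 * x - 2 * f t) - (2 * x' - 2 * f t) = 2 * (x - x') by ring,
                abs_mul]
              norm_num
      rw [Real.dist_eq]
      have hdx : dist x x' = |x - x'| := Real.dist_eq x x'
      calc |(-(q t) * S1) - (-(q t) * S2)| = |q t| * |S1 - S2| := by
            rw [show (-(q t) * S1) - (-(q t) * S2) = -(q t) * (S1 - S2) by ring,
              abs_mul, abs_neg]
        _ ≤ C * |S1 - S2| := mul_le_mul_of_nonneg_right (hqC t) (abs_nonneg _)
        _ ≤ C * (2 * |x - x'|) := mul_le_mul_of_nonneg_left hsin hCnn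
        _ ≤ (K : ℝ) * dist ((x, y) : ℝ × ℝ) (x', y') := by
            rw [hKval]
            have hx1 : |x - x'| ≤ dist ((x, y) : ℝ × ℝ) (x', y') := by
              rw [← hdx] at *; exact h1
            nlinarith [abs_nonneg (x - x')]
  -- the two solutions
  set F : ℝ → ℝ × ℝ := fun t => (θ t, θ' t) with hF_def
  set G : ℝ → ℝ × ℝ := fun t => (2 * β - θ (2 * α - t), θ' (2 * α - t)) with hG_def
  have hneg : ∀ t : ℝ, HasDerivAt (fun s : ℝ => 2 * α - s) (-1) t := by
    intro t
    simpa using (hasDerivAt_id t).const_sub (2 * α)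
  have hF' : ∀ t, HasDerivAt F (θ' t, θ'' t) t := fun t => (hd1 t).prodMk (hd2 t)
  have hG' : ∀ t, HasDerivAt G (θ' (2 * α - t), -θ'' (2 * α - t)) t := by
    intro t
    have h1 : HasDerivAt (fun s => 2 * β - θ (2 * α - s)) (θ' (2 * α - t)) t := by
      have := ((hd1 (2 * α - t)).comp t (hneg t)).const_sub (2 * β)
      simpa using this
    have h2 : HasDerivAt (fun s => θ' (2 * α - s)) (-θ'' (2 * α - t)) t := by
      have := (hd2 (2 * α - t)).comp t (hneg t)
      simpa [Function.comp_def] using this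
    exact h1.prodMk h2
  -- multiples of 2π
  have hsin4 : ∀ z : ℝ, Real.sin (z - 4 * α) = Real.sin z ∧
      Real.sin (z - 4 * β) = Real.sin z := by
    intro z
    constructor
    · rcases hα with h | h <;> subst h
      · norm_num
      · rw [show z - 4 * π = z - 2 * π - 2 * π by ring, Real.sin_sub_two_pi,
          Real.sin_sub_two_pi]
    · rcases hβ with h | h <;> subst h
      · norm_num
      · rw [show z - 4 * (π / 2) = z - 2 * π by ring, Real.sin_sub_two_pi]
  -- F solves the ODE with v
  have hFode : ∀ t ∈ Ioo A B, HasDerivAt F (v t (F t)) t := by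
    intro t ht
    have hvF : v t (F t) = (θ' t, θ'' t) := by
      simp only [hv_def, hF_def]
      have : q t = c t := hqc t (Ioo_subset_Icc_self ht)
      rw [this, Prod.mk.injEq]
      have := hode t
      refine ⟨rfl, ?_⟩
      simp only [hc_def]; linarith
    rw [hvF]; exact hF' t
  have hGode : ∀ t ∈ Ioo A B, HasDerivAt G (v t (G t)) t := by
    intro t ht
    have hvG : v t (G t) = (θ' (2 * α - t), -θ'' (2 * α - t)) := by
      simp only [hv_def, hG_def]
      have hq : q t = c t := hqc t (Ioo_subset_Icc_self ht)
      rw [Prod.mk.injEq]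
      refine ⟨rfl, ?_⟩
      · rw [hq]
        have hodet := hode (2 * α - t)
        rw [hrsym t, hfsym t] at hodet
        -- hodet : θ'' (2α−t) + c t * sin (2 θ(2α−t) − 2(2α − f t)) = 0
        have harg1 : 2 * θ (2 * α - t) - 2 * (2 * α - f t)
            = (2 * θ (2 * α - t) + 2 * f t) - 4 * α := by ring
        have harg2 : 2 * (2 * β - θ (2 * α - t)) - 2 * f t
            = -((2 * θ (2 * α - t) + 2 * f t) - 4 * β) := by ring
        have h1 := (hsin4 (2 * θ (2 * α - t) + 2 * f t)).1
        have h2 := (hsin4 (2 * θ (2 * α - t) + 2 * f t)).2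
        rw [harg2, Real.sin_neg, h2]
        rw [harg1, h1] at hodet
        simp only [hc_def] at hodet ⊢
        linarith
    rw [hvG]; exact hG' t
  -- uniqueness
  have hmem : α ∈ Ioo A B := by
    constructor <;> simp only [hA, hB] <;> linarith
  have heqOn : EqOn F G (Icc A B) := by
    apply ODE_solution_unique_of_mem_Icc (s := fun _ => (univ : Set (ℝ × ℝ)))
      (fun t _ => (hv t).lipschitzOnWith) hmem
    · exact fun t _ => (hF' t).continuousAt.continuousWithinAt
    · exact hFode
    · exact fun _ _ => trivial
    · exact fun t _ => (hG' t).continuousAt.continuousWithinAt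
    · exact hGode
    · exact fun _ _ => trivial
    · simp only [hF_def, hG_def]
      rw [show 2 * α - α = α by ring, hbc, Prod.mk.injEq]
      exact ⟨by ring, rfl⟩
  -- evaluate at α - nπ
  have hnpi : |(n : ℝ) * π| ≤ L := by
    rw [hL, abs_mul, abs_of_nonneg Real.pi_pos.le]
    linarith
  have hmem2 : α - n * π ∈ Icc A B := by
    have h1 := abs_le.mp hnpi
    constructor <;> simp only [hA, hB] <;> linarith
  have hfg := heqOn hmem2
  have hkey : θ (α - n * π) = 2 * β - θ (α + n * π) := by
    have := congrArg Prod.fst hfg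
    simp only [hF_def, hG_def] at this
    rw [show 2 * α - (α - (n:ℝ) * π) = α + n * π by ring] at this
    exact this
  have hr := hres (α - n * π)
  rw [show α - (n:ℝ) * π + 2 * π * n = α + n * π by ring] at hr
  rw [hkey] at hr
  linarith
end

section
/- Let (θ₁(t), θ₂(t)) be a solution of the spin-spin system satisfying θⱼ(0) = βⱼ and θⱼ(π) = βⱼ + mⱼπ/2 for j = 1,2, with βⱼ ∈ {0, π/2} and mⱼ ∈ ℤ. Then the solution is in a balanced (m₁:2, m₂:2) spin-spin resonance, i.e., θⱼ(t + 2π) = θⱼ(t) + mⱼπ for all t and both j, and it satisfies the symmetry relations θⱼ(t) = 2βⱼ − θⱼ(−t). -/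
open Real Set

lemma aux_lip_const_mul (c : ℝ) : LipschitzWith ‖c‖₊ (fun x : ℝ => c * x) := by
  apply LipschitzWith.of_dist_le_mul
  intro x y
  simp only [Real.dist_eq, ← mul_sub, abs_mul, coe_nnnorm, Real.norm_eq_abs]
  exact le_rfl

lemma aux_fderiv_periodic {E F : Type*} [NormedAddCommGroup E] [NormedSpace ℝ E]
    [NormedAddCommGroup F] [NormedSpace ℝ F]
    {f : E → F} (hf : Differentiable ℝ f) {c : E} (hp : ∀ p, f (p + c) = f p) (p : E) :
    fderiv ℝ f (p + c) = fderiv ℝ f p := by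
  have h1 : HasFDerivAt (fun q => f (q + c))
      ((fderiv ℝ f (p + c)).comp (ContinuousLinearMap.id ℝ E)) p :=
    (hf (p + c)).hasFDerivAt.comp p ((hasFDerivAt_id p).add_const c)
  have h2 : (fun q => f (q + c)) = f := funext hp
  rw [h2] at h1
  rw [h1.fderiv, ContinuousLinearMap.comp_id]

lemma aux_ode_unique {E : Type*} [NormedAddCommGroup E] [NormedSpace ℝ E] {v : ℝ → E → E}
    {K : NNReal} (hv : ∀ t, LipschitzWith K (v t)) {f g : ℝ → E}
    (hf : ∀ t, HasDerivAt f (v t (f t)) t) (hg : ∀ t, HasDerivAt g (v t (g t)) t)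
    {t₀ : ℝ} (h0 : f t₀ = g t₀) : ∀ t, f t = g t := by
  intro t
  have h1 : min t t₀ - 1 < t₀ := by have := min_le_right t t₀; linarith
  have h2 : t₀ < max t t₀ + 1 := by have := le_max_right t t₀; linarith
  have h3 : min t t₀ - 1 < t := by have := min_le_left t t₀; linarith
  have h4 : t < max t t₀ + 1 := by have := le_max_left t t₀; linarith
  exact ODE_solution_unique_of_mem_Ioo (s := fun _ => (univ : Set E))
    (fun t _ => (hv t).lipschitzOnWith) ⟨h1, h2⟩
    (fun t _ => ⟨hf t, trivial⟩) (fun t _ => ⟨hg t, trivial⟩) h0 ⟨h3, h4⟩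

set_option maxHeartbeats 1000000 in
/-- Dirichlet conditions θⱼ(0) = βⱼ, θⱼ(π) = βⱼ + mⱼπ/2 for the spin-spin system imply
a balanced (m₁:2, m₂:2) spin-spin resonance, together with the symmetry relations
θⱼ(t) = 2βⱼ − θⱼ(−t). -/
theorem stmt_15 (C1 C2 : ℝ) (hC1 : 0 < C1) (hC2 : 0 < C2)
    (W W1 W2 : ℝ → ℝ → ℝ → ℝ)
    (hW1 : ∀ t x y, HasDerivAt (fun s => W t s y) (W1 t x y) x)
    (hW2 : ∀ t x y, HasDerivAt (fun s => W t x s) (W2 t x y) y)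
    (hW1smooth : ContDiff ℝ 1 (fun p : ℝ × ℝ × ℝ => W1 p.1 p.2.1 p.2.2))
    (hW2smooth : ContDiff ℝ 1 (fun p : ℝ × ℝ × ℝ => W2 p.1 p.2.1 p.2.2))
    (hWtper : ∀ t x y, W (t + 2 * π) x y = W t x y)
    (hWθ1per : ∀ t x y, W t (x + π) y = W t x y)
    (hWθ2per : ∀ t x y, W t x (y + π) = W t x y)
    (hWsym : ∀ (k l1 l2 : ℤ) (t x y : ℝ),
      W (2 * (π * k) - t) (2 * ((π / 2) * l1) - x) (2 * ((π / 2) * l2) - y) = W t x y)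
    (β1 β2 : ℝ) (hβ1 : β1 = 0 ∨ β1 = π / 2) (hβ2 : β2 = 0 ∨ β2 = π / 2)
    (m1 m2 : ℤ)
    (θ1 θ2 θ1' θ2' : ℝ → ℝ)
    (hd11 : ∀ t, HasDerivAt θ1 (θ1' t) t)
    (hd12 : ∀ t, HasDerivAt θ1' (-(1 / C1) * W1 t (θ1 t) (θ2 t)) t)
    (hd21 : ∀ t, HasDerivAt θ2 (θ2' t) t)
    (hd22 : ∀ t, HasDerivAt θ2' (-(1 / C2) * W2 t (θ1 t) (θ2 t)) t)
    (hbc10 : θ1 0 = β1) (hbc1π : θ1 π = β1 + m1 * π / 2)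
    (hbc20 : θ2 0 = β2) (hbc2π : θ2 π = β2 + m2 * π / 2) :
    (∀ t, θ1 (t + 2 * π) = θ1 t + m1 * π ∧ θ2 (t + 2 * π) = θ2 t + m2 * π) ∧
    (∀ t, θ1 t = 2 * β1 - θ1 (-t) ∧ θ2 t = 2 * β2 - θ2 (-t)) := by
  -- integers representing β's
  obtain ⟨l1, hl1⟩ : ∃ l : ℤ, 2 * ((π / 2) * (l : ℝ)) = 2 * β1 := by
    rcases hβ1 with h | h
    · exact ⟨0, by simp [h]⟩
    · exact ⟨1, by simp [h]⟩
  obtain ⟨l2, hl2⟩ : ∃ l : ℤ, 2 * ((π / 2) * (l : ℝ)) = 2 * β2 := by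
    rcases hβ2 with h | h
    · exact ⟨0, by simp [h]⟩
    · exact ⟨1, by simp [h]⟩
  -- periodicity of W1, W2
  have hW1t : ∀ t x y, W1 (t + 2 * π) x y = W1 t x y := by
    intro t x y
    have h1 := hW1 (t + 2 * π) x y
    have h2 : (fun s => W (t + 2 * π) s y) = (fun s => W t s y) :=
      funext fun s => hWtper t s y
    rw [h2] at h1
    exact h1.unique (hW1 t x y)
  have hW2t : ∀ t x y, W2 (t + 2 * π) x y = W2 t x y := by
    intro t x y
    have h1 := hW2 (t + 2 * π) x y
    have h2 : (fun s => W (t + 2 * π) x s) = (fun s => W t x s) :=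
      funext fun s => hWtper t x s
    rw [h2] at h1
    exact h1.unique (hW2 t x y)
  have hW1x : ∀ t x y, W1 t (x + π) y = W1 t x y := by
    intro t x y
    have h1 := (hW1 t (x + π) y).comp x ((hasDerivAt_id x).add_const π)
    have h1' : HasDerivAt (fun s => W t (s + π) y) (W1 t (x + π) y * 1) x := h1
    have h2 : (fun s => W t (s + π) y) = (fun s => W t s y) :=
      funext fun s => hWθ1per t s y
    rw [h2] at h1'
    have := h1'.unique (hW1 t x y)
    linarith [this]
  have hW1y : ∀ t x y, W1 t x (y + π) = W1 t x y := by
    intro t x y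
    have h1 := hW1 t x (y + π)
    have h2 : (fun s => W t s (y + π)) = (fun s => W t s y) :=
      funext fun s => hWθ2per t s y
    rw [h2] at h1
    exact h1.unique (hW1 t x y)
  have hW2x : ∀ t x y, W2 t (x + π) y = W2 t x y := by
    intro t x y
    have h1 := hW2 t (x + π) y
    have h2 : (fun s => W t (x + π) s) = (fun s => W t x s) :=
      funext fun s => hWθ1per t x s
    rw [h2] at h1
    exact h1.unique (hW2 t x y)
  have hW2y : ∀ t x y, W2 t x (y + π) = W2 t x y := by
    intro t x y
    have h1 := (hW2 t x (y + π)).comp y ((hasDerivAt_id y).add_const π)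
    have h1' : HasDerivAt (fun s => W t x (s + π)) (W2 t x (y + π) * 1) y := h1
    have h2 : (fun s => W t x (s + π)) = (fun s => W t x s) :=
      funext fun s => hWθ2per t x s
    rw [h2] at h1'
    have := h1'.unique (hW2 t x y)
    linarith [this]
  -- symmetry of W1, W2
  have hW1sym : ∀ (k l1 l2 : ℤ) (t x y : ℝ),
      W1 (2 * (π * k) - t) (2 * ((π / 2) * l1) - x) (2 * ((π / 2) * l2) - y) = -W1 t x y := by
    intro k a1 a2 t x y
    have h1 := (hW1 (2 * (π * k) - t) (2 * ((π / 2) * a1) - x) (2 * ((π / 2) * a2) - y)).comp x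
      ((hasDerivAt_id x).const_sub (2 * ((π / 2) * (a1 : ℝ))))
    have h1' : HasDerivAt (fun s => W (2 * (π * k) - t) (2 * ((π / 2) * a1) - s)
        (2 * ((π / 2) * a2) - y))
        (W1 (2 * (π * k) - t) (2 * ((π / 2) * a1) - x) (2 * ((π / 2) * a2) - y) * (-1)) x := h1
    have h2 : (fun s => W (2 * (π * k) - t) (2 * ((π / 2) * a1) - s) (2 * ((π / 2) * a2) - y)) =
        (fun s => W t s y) := funext fun s => hWsym k a1 a2 t s y
    rw [h2] at h1'
    have := h1'.unique (hW1 t x y)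
    linarith [this]
  have hW2sym : ∀ (k l1 l2 : ℤ) (t x y : ℝ),
      W2 (2 * (π * k) - t) (2 * ((π / 2) * l1) - x) (2 * ((π / 2) * l2) - y) = -W2 t x y := by
    intro k a1 a2 t x y
    have h1 := (hW2 (2 * (π * k) - t) (2 * ((π / 2) * a1) - x) (2 * ((π / 2) * a2) - y)).comp y
      ((hasDerivAt_id y).const_sub (2 * ((π / 2) * (a2 : ℝ))))
    have h1' : HasDerivAt (fun s => W (2 * (π * k) - t) (2 * ((π / 2) * a1) - x)
        (2 * ((π / 2) * a2) - s))
        (W2 (2 * (π * k) - t) (2 * ((π / 2) * a1) - x) (2 * ((π / 2) * a2) - y) * (-1)) y := h1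
    have h2 : (fun s => W (2 * (π * k) - t) (2 * ((π / 2) * a1) - x) (2 * ((π / 2) * a2) - s)) =
        (fun s => W t x s) := funext fun s => hWsym k a1 a2 t x s
    rw [h2] at h1'
    have := h1'.unique (hW2 t x y)
    linarith [this]
  -- the combined field G and its Lipschitz property
  set G : ℝ × ℝ × ℝ → ℝ × ℝ :=
    fun p => (W1 p.1 p.2.1 p.2.2, W2 p.1 p.2.1 p.2.2) with hGdef
  have hGsmooth : ContDiff ℝ 1 G := hW1smooth.prodMk hW2smooth
  have hGdiff : Differentiable ℝ G := hGsmooth.differentiable one_ne_zero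
  have hGp1 : ∀ p, G (p + ((2 * π, 0, 0) : ℝ × ℝ × ℝ)) = G p := by
    intro p
    show (W1 (p.1 + 2 * π) (p.2.1 + 0) (p.2.2 + 0), W2 (p.1 + 2 * π) (p.2.1 + 0) (p.2.2 + 0)) = _
    simp [hW1t, hW2t, hGdef]
  have hGp2 : ∀ p, G (p + ((0, π, 0) : ℝ × ℝ × ℝ)) = G p := by
    intro p
    show (W1 (p.1 + 0) (p.2.1 + π) (p.2.2 + 0), W2 (p.1 + 0) (p.2.1 + π) (p.2.2 + 0)) = _
    simp [hW1x, hW2x, hGdef]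
  have hGp3 : ∀ p, G (p + ((0, 0, π) : ℝ × ℝ × ℝ)) = G p := by
    intro p
    show (W1 (p.1 + 0) (p.2.1 + 0) (p.2.2 + π), W2 (p.1 + 0) (p.2.1 + 0) (p.2.2 + π)) = _
    simp [hW1y, hW2y, hGdef]
  set DG : ℝ × ℝ × ℝ → (ℝ × ℝ × ℝ) →L[ℝ] ℝ × ℝ := fun p => fderiv ℝ G p with hDGdef
  have hDG1 : Function.Periodic DG ((2 * π, 0, 0) : ℝ × ℝ × ℝ) :=
    fun p => aux_fderiv_periodic hGdiff hGp1 p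
  have hDG2 : Function.Periodic DG ((0, π, 0) : ℝ × ℝ × ℝ) :=
    fun p => aux_fderiv_periodic hGdiff hGp2 p
  have hDG3 : Function.Periodic DG ((0, 0, π) : ℝ × ℝ × ℝ) :=
    fun p => aux_fderiv_periodic hGdiff hGp3 p
  have hπ : (0:ℝ) < π := Real.pi_pos
  obtain ⟨C, hC⟩ : ∃ C : ℝ, ∀ p ∈ (Icc (0:ℝ) (2*π) ×ˢ (Icc (0:ℝ) π ×ˢ Icc (0:ℝ) π)),
      ‖DG p‖ ≤ C := by
    apply (isCompact_Icc.prod (isCompact_Icc.prod isCompact_Icc)).exists_bound_of_continuousOn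
    exact ((hGsmooth.continuous_fderiv one_ne_zero).comp continuous_id).continuousOn
  have hCbound : ∀ p, ‖DG p‖ ≤ C := by
    intro p
    obtain ⟨a, b, c⟩ := p
    have h2π : (0:ℝ) < 2 * π := by linarith
    have hk1 : 0 ≤ a - ⌊a / (2 * π)⌋ * (2 * π) := Int.sub_floor_div_mul_nonneg a h2π
    have hk2 : a - ⌊a / (2 * π)⌋ * (2 * π) < 2 * π := Int.sub_floor_div_mul_lt a h2π
    have hm1 : 0 ≤ b - ⌊b / π⌋ * π := Int.sub_floor_div_mul_nonneg b hπ
    have hm2 : b - ⌊b / π⌋ * π < π := Int.sub_floor_div_mul_lt b hπ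
    have hn1 : 0 ≤ c - ⌊c / π⌋ * π := Int.sub_floor_div_mul_nonneg c hπ
    have hn2 : c - ⌊c / π⌋ * π < π := Int.sub_floor_div_mul_lt c hπ
    have hsm : ∀ (j : ℤ) (u w z : ℝ), j • ((u, w, z) : ℝ × ℝ × ℝ)
        = (((j:ℝ) * u, (j:ℝ) * w, (j:ℝ) * z) : ℝ × ℝ × ℝ) := by
      intro j u w z
      simp [Prod.smul_mk, zsmul_eq_mul]
    have hper := ((hDG1.zsmul ⌊a / (2 * π)⌋).add_period
      (hDG2.zsmul ⌊b / π⌋)).add_period (hDG3.zsmul ⌊c / π⌋)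
    rw [hsm, hsm, hsm] at hper
    have hmem := hper ((a - ⌊a / (2 * π)⌋ * (2 * π), b - ⌊b / π⌋ * π, c - ⌊c / π⌋ * π) : ℝ × ℝ × ℝ)
    have heq : ((a - ⌊a / (2 * π)⌋ * (2 * π), b - ⌊b / π⌋ * π, c - ⌊c / π⌋ * π) : ℝ × ℝ × ℝ)
        + (((⌊a / (2 * π)⌋ : ℝ) * (2 * π), (⌊a / (2 * π)⌋ : ℝ) * 0, (⌊a / (2 * π)⌋ : ℝ) * 0)
          + ((⌊b / π⌋ : ℝ) * 0, (⌊b / π⌋ : ℝ) * π, (⌊b / π⌋ : ℝ) * 0)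
          + ((⌊c / π⌋ : ℝ) * 0, (⌊c / π⌋ : ℝ) * 0, (⌊c / π⌋ : ℝ) * π))
        = ((a, b, c) : ℝ × ℝ × ℝ) := by
      simp only [Prod.mk_add_mk, Prod.mk.injEq]
      refine ⟨by ring, by ring, by ring⟩
    rw [heq] at hmem
    rw [hmem]
    exact hC _ ⟨⟨hk1, hk2.le⟩, ⟨hm1, hm2.le⟩, ⟨hn1, hn2.le⟩⟩
  have hGlip : LipschitzWith (Real.toNNReal C) G := by
    apply lipschitzWith_of_nnnorm_fderiv_le hGdiff
    intro p
    have := hCbound p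
    rw [← norm_toNNReal]
    exact Real.toNNReal_mono this
  -- the first-order vector field
  set v : ℝ → ((ℝ × ℝ) × ℝ × ℝ) → ((ℝ × ℝ) × ℝ × ℝ) :=
    fun t z => (z.2, (-(1 / C1) * (G (t, z.1)).1, -(1 / C2) * (G (t, z.1)).2)) with hvdef
  have hv : ∀ t, LipschitzWith
      (max 1 (max (‖-(1 / C1)‖₊ * (1 * (Real.toNNReal C * (1 * 1))))
        (‖-(1 / C2)‖₊ * (1 * (Real.toNNReal C * (1 * 1)))))) (v t) := by
    intro t
    have LG : LipschitzWith ((Real.toNNReal C) * (1 * 1))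
        (fun z : (ℝ × ℝ) × ℝ × ℝ => G (t, z.1)) :=
      hGlip.comp ((LipschitzWith.prodMk_left t).comp LipschitzWith.prod_fst)
    have L21 := (aux_lip_const_mul (-(1 / C1))).comp (LipschitzWith.prod_fst.comp LG)
    have L22 := (aux_lip_const_mul (-(1 / C2))).comp (LipschitzWith.prod_snd.comp LG)
    exact (LipschitzWith.prod_snd).prodMk (L21.prodMk L22)
  -- the solution as a curve in phase space
  set f : ℝ → (ℝ × ℝ) × ℝ × ℝ := fun t => ((θ1 t, θ2 t), (θ1' t, θ2' t)) with hfdef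
  have hf : ∀ t, HasDerivAt f (v t (f t)) t := fun t =>
    ((hd11 t).prodMk (hd21 t)).prodMk ((hd12 t).prodMk (hd22 t))
  -- the reflected solution about t = 0
  set g : ℝ → (ℝ × ℝ) × ℝ × ℝ :=
    fun t => ((2 * β1 - θ1 (-t), 2 * β2 - θ2 (-t)), (θ1' (-t), θ2' (-t))) with hgdef
  have key1 : ∀ t : ℝ, W1 (-t) (θ1 (-t)) (θ2 (-t))
      = -W1 t (2 * β1 - θ1 (-t)) (2 * β2 - θ2 (-t)) := by
    intro t
    have h := hW1sym 0 l1 l2 t (2 * β1 - θ1 (-t)) (2 * β2 - θ2 (-t))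
    rw [hl1, hl2] at h
    simpa using h
  have key2 : ∀ t : ℝ, W2 (-t) (θ1 (-t)) (θ2 (-t))
      = -W2 t (2 * β1 - θ1 (-t)) (2 * β2 - θ2 (-t)) := by
    intro t
    have h := hW2sym 0 l1 l2 t (2 * β1 - θ1 (-t)) (2 * β2 - θ2 (-t))
    rw [hl1, hl2] at h
    simpa using h
  have hg : ∀ t, HasDerivAt g (v t (g t)) t := by
    intro t
    have hneg : HasDerivAt (fun s : ℝ => -s) (-1) t := hasDerivAt_neg' t
    have hg11 : HasDerivAt (fun t => 2 * β1 - θ1 (-t)) (θ1' (-t)) t := by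
      have h := ((hd11 (-t)).comp t hneg).const_sub (2 * β1)
      simpa using h
    have hg12 : HasDerivAt (fun t => 2 * β2 - θ2 (-t)) (θ2' (-t)) t := by
      have h := ((hd21 (-t)).comp t hneg).const_sub (2 * β2)
      simpa using h
    have hg21 : HasDerivAt (fun t => θ1' (-t))
        (-(1 / C1) * W1 t (2 * β1 - θ1 (-t)) (2 * β2 - θ2 (-t))) t := by
      have h := (hd12 (-t)).comp t hneg
      have h' : HasDerivAt (fun t => θ1' (-t)) (-(1 / C1) * W1 (-t) (θ1 (-t)) (θ2 (-t)) * (-1)) t := h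
      rw [key1 t] at h'
      convert h' using 1
      ring
    have hg22 : HasDerivAt (fun t => θ2' (-t))
        (-(1 / C2) * W2 t (2 * β1 - θ1 (-t)) (2 * β2 - θ2 (-t))) t := by
      have h := (hd22 (-t)).comp t hneg
      have h' : HasDerivAt (fun t => θ2' (-t)) (-(1 / C2) * W2 (-t) (θ1 (-t)) (θ2 (-t)) * (-1)) t := h
      rw [key2 t] at h'
      convert h' using 1
      ring
    exact (hg11.prodMk hg12).prodMk (hg21.prodMk hg22)
  have hfg0 : f 0 = g 0 := by
    have e1 : (2:ℝ) * β1 - θ1 (-0) = θ1 0 := by rw [neg_zero, hbc10]; ring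
    have e2 : (2:ℝ) * β2 - θ2 (-0) = θ2 0 := by rw [neg_zero, hbc20]; ring
    simp only [hfdef, hgdef, neg_zero, Prod.mk.injEq]
    rw [neg_zero] at e1 e2
    exact ⟨⟨e1.symm, e2.symm⟩, trivial⟩
  have hfg : ∀ t, f t = g t := aux_ode_unique hv hf hg hfg0
  have hsym1 : ∀ t, θ1 t = 2 * β1 - θ1 (-t) ∧ θ2 t = 2 * β2 - θ2 (-t) := by
    intro t
    have h := hfg t
    simp only [hfdef, hgdef, Prod.mk.injEq] at h
    exact ⟨h.1.1, h.1.2⟩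
  -- the reflected solution about t = π
  set b1 : ℝ := β1 + m1 * π / 2 with hb1def
  set b2 : ℝ := β2 + m2 * π / 2 with hb2def
  have hl1' : 2 * ((π / 2) * ((l1 + m1 : ℤ) : ℝ)) = 2 * b1 := by
    push_cast
    rw [hb1def]
    have : (π / 2) * (l1 : ℝ) = β1 := by linarith [hl1]
    nlinarith [this]
  have hl2' : 2 * ((π / 2) * ((l2 + m2 : ℤ) : ℝ)) = 2 * b2 := by
    push_cast
    rw [hb2def]
    have : (π / 2) * (l2 : ℝ) = β2 := by linarith [hl2]
    nlinarith [this]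
  set h : ℝ → (ℝ × ℝ) × ℝ × ℝ :=
    fun t => ((2 * b1 - θ1 (2 * π - t), 2 * b2 - θ2 (2 * π - t)),
      (θ1' (2 * π - t), θ2' (2 * π - t))) with hhdef
  have key1' : ∀ t : ℝ, W1 (2 * π - t) (θ1 (2 * π - t)) (θ2 (2 * π - t))
      = -W1 t (2 * b1 - θ1 (2 * π - t)) (2 * b2 - θ2 (2 * π - t)) := by
    intro t
    have hh := hW1sym 1 (l1 + m1) (l2 + m2) t (2 * b1 - θ1 (2 * π - t)) (2 * b2 - θ2 (2 * π - t))
    rw [hl1', hl2'] at hh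
    have e1 : 2 * (π * ((1:ℤ):ℝ)) - t = 2 * π - t := by push_cast; ring
    rw [e1] at hh
    simpa using hh
  have key2' : ∀ t : ℝ, W2 (2 * π - t) (θ1 (2 * π - t)) (θ2 (2 * π - t))
      = -W2 t (2 * b1 - θ1 (2 * π - t)) (2 * b2 - θ2 (2 * π - t)) := by
    intro t
    have hh := hW2sym 1 (l1 + m1) (l2 + m2) t (2 * b1 - θ1 (2 * π - t)) (2 * b2 - θ2 (2 * π - t))
    rw [hl1', hl2'] at hh
    have e1 : 2 * (π * ((1:ℤ):ℝ)) - t = 2 * π - t := by push_cast; ring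
    rw [e1] at hh
    simpa using hh
  have hh : ∀ t, HasDerivAt h (v t (h t)) t := by
    intro t
    have hrefl : HasDerivAt (fun s : ℝ => 2 * π - s) (-1) t := by
      simpa using (hasDerivAt_id t).const_sub (2 * π)
    have hh11 : HasDerivAt (fun t => 2 * b1 - θ1 (2 * π - t)) (θ1' (2 * π - t)) t := by
      have hc := ((hd11 (2 * π - t)).comp t hrefl).const_sub (2 * b1)
      simpa using hc
    have hh12 : HasDerivAt (fun t => 2 * b2 - θ2 (2 * π - t)) (θ2' (2 * π - t)) t := by
      have hc := ((hd21 (2 * π - t)).comp t hrefl).const_sub (2 * b2)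
      simpa using hc
    have hh21 : HasDerivAt (fun t => θ1' (2 * π - t))
        (-(1 / C1) * W1 t (2 * b1 - θ1 (2 * π - t)) (2 * b2 - θ2 (2 * π - t))) t := by
      have hc := (hd12 (2 * π - t)).comp t hrefl
      have hc' : HasDerivAt (fun t => θ1' (2 * π - t))
          (-(1 / C1) * W1 (2 * π - t) (θ1 (2 * π - t)) (θ2 (2 * π - t)) * (-1)) t := hc
      rw [key1' t] at hc'
      convert hc' using 1
      ring
    have hh22 : HasDerivAt (fun t => θ2' (2 * π - t))
        (-(1 / C2) * W2 t (2 * b1 - θ1 (2 * π - t)) (2 * b2 - θ2 (2 * π - t))) t := by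
      have hc := (hd22 (2 * π - t)).comp t hrefl
      have hc' : HasDerivAt (fun t => θ2' (2 * π - t))
          (-(1 / C2) * W2 (2 * π - t) (θ1 (2 * π - t)) (θ2 (2 * π - t)) * (-1)) t := hc
      rw [key2' t] at hc'
      convert hc' using 1
      ring
    exact (hh11.prodMk hh12).prodMk (hh21.prodMk hh22)
  have hfhπ : f π = h π := by
    have e : 2 * π - π = π := by ring
    have e1 : (2:ℝ) * b1 - θ1 (2 * π - π) = θ1 π := by rw [e, hbc1π, hb1def]; ring
    have e2 : (2:ℝ) * b2 - θ2 (2 * π - π) = θ2 π := by rw [e, hbc2π, hb2def]; ring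
    have e3 : θ1' (2 * π - π) = θ1' π := by rw [e]
    have e4 : θ2' (2 * π - π) = θ2' π := by rw [e]
    simp only [hfdef, hhdef, Prod.mk.injEq]
    exact ⟨⟨e1.symm, e2.symm⟩, e3.symm, e4.symm⟩
  have hfh : ∀ t, f t = h t := aux_ode_unique hv hf hh hfhπ
  have hsym2 : ∀ t, θ1 t = 2 * b1 - θ1 (2 * π - t) ∧ θ2 t = 2 * b2 - θ2 (2 * π - t) := by
    intro t
    have hx := hfh t
    simp only [hfdef, hhdef, Prod.mk.injEq] at hx
    exact ⟨hx.1.1, hx.1.2⟩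
  refine ⟨fun t => ?_, hsym1⟩
  have h1 := (hsym2 (t + 2 * π)).1
  have h2 := (hsym2 (t + 2 * π)).2
  have e : 2 * π - (t + 2 * π) = -t := by ring
  rw [e] at h1 h2
  have h3 := (hsym1 (-t)).1
  have h4 := (hsym1 (-t)).2
  rw [neg_neg] at h3 h4
  constructor
  · rw [h1, h3, hb1def]; push_cast; ring
  · rw [h2, h4, hb2def]; push_cast; ring
end
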